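/- Let L be an even lattice, H, h₁ ∈ L with H² = 8, h₁² = ±4, H·h₁ ≡ 0 mod 2, and suppose H is primitive in L and not congruent mod 2S to an element making H·S ⊂ 2ℤ, where S is the primitive closure of ℤH + ℤh₁. If H·S = ℤ, then in the 𝔽₂-vector space S/2S the images of H and h₁ are linearly dependent and both nonzero; consequently h₁ ≡ H mod 2S. -/

import Mathlib

/-- The primitive closure `(M ⊗ ℚ) ∩ L` of a sublattice `M` of a lattice `L`. -/
def primClosure {L : Type*} [AddCommGroup L] [Module ℤ L] (M : Submodule ℤ L) : Set L :=
  {x : L | ∃ n : ℤ, n ≠ 0 ∧ n • x ∈ M}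

lemma descent {L : Type*} [AddCommGroup L]
    (B : L →ₗ[ℤ] L →ₗ[ℤ] ℤ)
    (H h₁ : L) (hH : B H H = 8) (hpar : 2 ∣ B H h₁)
    (hinj : ∀ y : L, (2:ℤ) • y = 0 → y = 0)
    (hprimH : ¬ ∃ s : L, H = (2:ℤ) • s)
    (hprimh : ¬ ∃ s : L, h₁ = (2:ℤ) • s) :
    ∀ k : ℕ, ∀ n : ℤ, n.natAbs ≤ k → n ≠ 0 → ∀ a b : ℤ, ∀ x : L,
      n • x = a • H + b • h₁ → ¬ (2 ∣ B H x) → ∃ s : L, H + h₁ = (2:ℤ) • s := by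
  intro k
  induction k with
  | zero => intro n hn hn0; exfalso; omega
  | succ k ih =>
    intro n hn hn0 a b x hx hodd
    have key : n * B H x = a * 8 + b * B H h₁ := by
      have := congrArg (fun y => B H y) hx
      simpa [map_add, map_smul, hH, mul_comm] using this
    have hneven : 2 ∣ n := by
      rcases hpar with ⟨c, hc⟩
      have h2 : 2 ∣ n * B H x := ⟨a * 4 + b * c, by rw [key, hc]; ring⟩
      rcases ((Int.prime_two.dvd_mul).mp h2) with h | h
      · exact h
      · exact absurd h hodd
    obtain ⟨m, rfl⟩ := hneven
    have hm0 : m ≠ 0 := by rintro rfl; simp at hn0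
    rcases Int.even_or_odd a with ha | ha <;> rcases Int.even_or_odd b with hb | hb
    · -- both even: descend
      obtain ⟨a', rfl⟩ := ha
      obtain ⟨b', rfl⟩ := hb
      have h3 : m • x = a' • H + b' • h₁ := by
        have h2 : (2:ℤ) • (m • x - (a' • H + b' • h₁)) = 0 := by
          rw [smul_sub, smul_smul]
          rw [show (2:ℤ) * m = 2 * m from rfl, hx]
          module
        have := hinj _ h2
        rwa [sub_eq_zero] at this
      exact ih m (by omega) hm0 a' b' x h3 hodd
    · -- a even, b odd: h₁ divisible by 2
      exfalso
      obtain ⟨a', rfl⟩ := ha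
      obtain ⟨u, v, huv⟩ : ∃ u v : ℤ, b * u + 2 * v = 1 := by
        refine ⟨b, (1 - b * b)/2, ?_⟩
        rcases hb with ⟨c, hc⟩
        subst hc; ring_nf; omega
      apply hprimh
      refine ⟨u • (m • x - a' • H) + v • h₁, ?_⟩
      have hb' : b • h₁ = (2:ℤ) • (m • x - a' • H) := by
        rw [smul_sub, smul_smul, smul_smul, hx]; module
      calc h₁ = (b * u + 2 * v) • h₁ := by rw [huv, one_smul]
        _ = u • (b • h₁) + (2:ℤ) • (v • h₁) := by module
        _ = u • ((2:ℤ) • (m • x - a' • H)) + (2:ℤ) • (v • h₁) := by rw [hb']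
        _ = (2:ℤ) • (u • (m • x - a' • H) + v • h₁) := by module
    · -- a odd, b even: H divisible by 2
      exfalso
      obtain ⟨b', rfl⟩ := hb
      obtain ⟨u, v, huv⟩ : ∃ u v : ℤ, a * u + 2 * v = 1 := by
        refine ⟨a, (1 - a * a)/2, ?_⟩
        rcases ha with ⟨c, hc⟩
        subst hc; ring_nf; omega
      apply hprimH
      refine ⟨u • (m • x - b' • h₁) + v • H, ?_⟩
      have ha' : a • H = (2:ℤ) • (m • x - b' • h₁) := by
        rw [smul_sub, smul_smul, smul_smul, hx]; module
      calc H = (a * u + 2 * v) • H := by rw [huv, one_smul]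
        _ = u • (a • H) + (2:ℤ) • (v • H) := by module
        _ = u • ((2:ℤ) • (m • x - b' • h₁)) + (2:ℤ) • (v • H) := by rw [ha']
        _ = (2:ℤ) • (u • (m • x - b' • h₁) + v • H) := by module
    · -- both odd: done
      rcases ha with ⟨a', ha'⟩
      rcases hb with ⟨b', hb'⟩
      refine ⟨m • x - a' • H - b' • h₁, ?_⟩
      rw [smul_sub, smul_sub, smul_smul, hx]
      subst ha' hb'
      module

/-- With `H² = 8`, `h₁² = ±4`, `H·h₁` even, `H` primitive and `H·S = ℤ`
(`S` the primitive closure of `ℤH + ℤh₁`), the images of `H` and `h₁` in `S/2S` are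
both nonzero and linearly dependent; consequently `h₁ ≡ H mod 2S`. -/
theorem images_mod_two_dependent
    {L : Type*} [AddCommGroup L] [Module ℤ L] [Module.Free ℤ L] [Module.Finite ℤ L]
    (B : L →ₗ[ℤ] L →ₗ[ℤ] ℤ)
    (hsym : ∀ x y : L, B x y = B y x)
    (heven : ∀ x : L, 2 ∣ B x x)
    (H h₁ : L) (hH : B H H = 8)
    (hsq : B h₁ h₁ = 4 ∨ B h₁ h₁ = -4)
    (hpar : 2 ∣ B H h₁)
    (hprim : ∀ (n : ℤ) (x : L), H = n • x → IsUnit n)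
    (hideal : Ideal.span {z : ℤ | ∃ x ∈ primClosure (Submodule.span ℤ ({H, h₁} : Set L)),
        z = B H x} = ⊤) :
    (¬ ∃ s ∈ primClosure (Submodule.span ℤ ({H, h₁} : Set L)), H = 2 • s) ∧
    (¬ ∃ s ∈ primClosure (Submodule.span ℤ ({H, h₁} : Set L)), h₁ = 2 • s) ∧
    (∃ s ∈ primClosure (Submodule.span ℤ ({H, h₁} : Set L)), h₁ - H = 2 • s) := by
  have e : ‹Module ℤ L› = AddCommGroup.toIntModule L :=
    @Unique.uniq _ AddCommGroup.uniqueIntModule _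
  subst e
  have hprimH : ¬ ∃ s : L, H = (2:ℤ) • s := by
    rintro ⟨s, hs⟩
    have := hprim 2 s hs
    rw [Int.isUnit_iff] at this
    omega
  have hprimh : ¬ ∃ s : L, h₁ = (2:ℤ) • s := by
    rintro ⟨s, hs⟩
    have h4 : B h₁ h₁ = 4 * B s s := by
      rw [hs, map_smul]
      simp [map_smul, smul_eq_mul]
      ring
    rcases heven s with ⟨t, ht⟩
    rcases hsq with h | h <;> rw [h4, ht] at h <;> omega
  have hinj : ∀ y : L, (2:ℤ) • y = 0 → y = 0 := by
    intro y hy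
    haveI : Module.IsTorsionFree ℤ L := Module.Free.instIsTorsionFree ℤ L
    rcases smul_eq_zero.mp hy with h | h
    · norm_num at h
    · exact h
  have hodd : ∃ x ∈ primClosure (Submodule.span ℤ ({H, h₁} : Set L)), ¬ (2 ∣ B H x) := by
    by_contra hcon
    push_neg at hcon
    have hsub : {z : ℤ | ∃ x ∈ primClosure (Submodule.span ℤ ({H, h₁} : Set L)),
        z = B H x} ⊆ (Ideal.span {(2:ℤ)} : Ideal ℤ) := by
      rintro z ⟨x, hx, rfl⟩
      rw [SetLike.mem_coe, Ideal.mem_span_singleton]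
      exact hcon x hx
    have hle := Ideal.span_le.mpr hsub
    rw [hideal] at hle
    have h1 : (1:ℤ) ∈ Ideal.span {(2:ℤ)} := hle trivial
    rw [Ideal.mem_span_singleton] at h1
    omega
  obtain ⟨x, ⟨n, hn0, hnx⟩, hoddx⟩ := hodd
  rw [Submodule.mem_span_pair] at hnx
  obtain ⟨a, b, hab⟩ := hnx
  obtain ⟨s, hs⟩ : ∃ s : L, H + h₁ = (2:ℤ) • s :=
    descent B H h₁ hH hpar hinj hprimH hprimh n.natAbs n le_rfl hn0 a b x hab.symm hoddx
  have hsmul : ∀ y : L, (2:ℕ) • y = (2:ℤ) • y := by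
    intro y
    rw [two_smul, two_smul]
  refine ⟨?_, ?_, ?_⟩
  · rintro ⟨t, _, ht⟩; exact hprimH ⟨t, by rw [ht, hsmul]⟩
  · rintro ⟨t, _, ht⟩; exact hprimh ⟨t, by rw [ht, hsmul]⟩
  · have hkey : h₁ - H = (2:ℤ) • (s - H) := by
      rw [smul_sub, ← hs]
      abel
    refine ⟨s - H, ⟨2, by norm_num, ?_⟩, by rw [hsmul, ← hkey]⟩
    rw [← hkey, Submodule.mem_span_pair]
    exact ⟨-1, 1, by module⟩
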